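/- If at a point of ℝ^n one has u_m = 0 and ∇u_m = 0, where u_m(X,y,z,w) = |X|² - ℓy² + η_m·e^{λ_m·x₁}·cos(λ_m·z) with η_m, λ_m > 0, then necessarily x₂ = ⋯ = x_ℓ = 0, y = 0, sin(λ_m·z) = 0, and cos(λ_m·z) = -1. -/

import Mathlib

open Real

set_option maxHeartbeats 1000000 in
/-- if at a point `v ∈ ℝ^n` one has `u_m(v) = 0` and `∇u_m(v) = 0`, where
`u_m(v) = |X|² - ℓ y² + η e^{λ x₁} cos(λ z)` with `η, λ > 0`, then `x₂ = ⋯ = x_ℓ = 0`,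
`y = 0`, `sin(λ z) = 0`, and `cos(λ z) = -1`. -/
theorem critical_point_structure (n ℓ : ℕ) (hn : 3 ≤ n) (hℓ : 1 ≤ ℓ) (hℓn : ℓ ≤ n - 2)
    (η lam : ℝ) (hη : 0 < η) (hlam : 0 < lam)
    (u : EuclideanSpace ℝ (Fin n) → ℝ)
    (hu : ∀ v, u v =
      (∑ i : Fin n, if (i : ℕ) < ℓ then (v i) ^ 2 else 0)
        - (ℓ : ℝ) * (v ⟨ℓ, by omega⟩) ^ 2
        + η * Real.exp (lam * v ⟨0, by omega⟩) * Real.cos (lam * v ⟨ℓ + 1, by omega⟩))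
    (v : EuclideanSpace ℝ (Fin n)) (h0 : u v = 0) (hgrad : gradient u v = 0) :
    (∀ i : Fin n, 1 ≤ (i : ℕ) → (i : ℕ) < ℓ → v i = 0)
      ∧ v ⟨ℓ, by omega⟩ = 0
      ∧ Real.sin (lam * v ⟨ℓ + 1, by omega⟩) = 0
      ∧ Real.cos (lam * v ⟨ℓ + 1, by omega⟩) = -1 := by
  classical
  have hℓn' : ℓ < n := by omega
  have hℓ1n : ℓ + 1 < n := by omega
  have h0n : 0 < n := by omega
  set a : Fin n := ⟨ℓ, hℓn'⟩ with ha
  set z0 : Fin n := ⟨0, h0n⟩ with hz0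
  set z1 : Fin n := ⟨ℓ + 1, hℓ1n⟩ with hz1
  set D : EuclideanSpace ℝ (Fin n) →L[ℝ] ℝ :=
    (∑ i : Fin n, if (i : ℕ) < ℓ then (2 * v i) • (EuclideanSpace.proj i : EuclideanSpace ℝ (Fin n) →L[ℝ] ℝ) else 0)
    - ((ℓ : ℝ) * (2 * v a)) • (EuclideanSpace.proj a : EuclideanSpace ℝ (Fin n) →L[ℝ] ℝ)
    + ((η * Real.exp (lam * v z0) * Real.cos (lam * v z1) * lam) • (EuclideanSpace.proj z0 : EuclideanSpace ℝ (Fin n) →L[ℝ] ℝ)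
        + (-(η * Real.exp (lam * v z0) * Real.sin (lam * v z1) * lam)) • (EuclideanSpace.proj z1 : EuclideanSpace ℝ (Fin n) →L[ℝ] ℝ))
    with hDdef
  have hsqpre : True := trivial
  have hproj : ∀ i : Fin n, HasFDerivAt (fun w : EuclideanSpace ℝ (Fin n) => w i)
      (EuclideanSpace.proj i : EuclideanSpace ℝ (Fin n) →L[ℝ] ℝ) v := by
    intro i
    exact (PiLp.proj (𝕜 := ℝ) 2 (fun _ : Fin n => ℝ) i).hasFDerivAt
  have h1 : HasFDerivAt
      (fun w : EuclideanSpace ℝ (Fin n) => ∑ i : Fin n, if (i : ℕ) < ℓ then (w i) ^ 2 else 0)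
      (∑ i : Fin n, if (i : ℕ) < ℓ then (2 * v i) • (EuclideanSpace.proj i : EuclideanSpace ℝ (Fin n) →L[ℝ] ℝ) else 0) v := by
    apply HasFDerivAt.fun_sum
    intro i _
    by_cases hi : (i : ℕ) < ℓ
    · simp only [hi, if_true]
      have h := (hproj i).fun_mul (hproj i)
      simp only [pow_two]
      refine h.congr_fderiv ?_
      ext w
      simp [smul_eq_mul]
      ring
    · simp only [hi, if_false]
      exact hasFDerivAt_const 0 v
  have h2 : HasFDerivAt (fun w : EuclideanSpace ℝ (Fin n) => (ℓ : ℝ) * (w a) ^ 2)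
      (((ℓ : ℝ) * (2 * v a)) • (EuclideanSpace.proj a : EuclideanSpace ℝ (Fin n) →L[ℝ] ℝ)) v := by
    have h := ((hproj a).fun_mul (hproj a)).const_mul (ℓ : ℝ)
    simp only [pow_two]
    refine h.congr_fderiv ?_
    ext w
    simp [smul_eq_mul]
    ring
  have hlin0 : HasFDerivAt (fun w : EuclideanSpace ℝ (Fin n) => lam * w z0)
      (lam • (EuclideanSpace.proj z0 : EuclideanSpace ℝ (Fin n) →L[ℝ] ℝ)) v := (hproj z0).const_mul lam
  have hlin1 : HasFDerivAt (fun w : EuclideanSpace ℝ (Fin n) => lam * w z1)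
      (lam • (EuclideanSpace.proj z1 : EuclideanSpace ℝ (Fin n) →L[ℝ] ℝ)) v := (hproj z1).const_mul lam
  have hexp : HasFDerivAt (fun w : EuclideanSpace ℝ (Fin n) => Real.exp (lam * w z0))
      (Real.exp (lam * v z0) • (lam • (EuclideanSpace.proj z0 : EuclideanSpace ℝ (Fin n) →L[ℝ] ℝ))) v :=
    (Real.hasDerivAt_exp (lam * v z0)).comp_hasFDerivAt (h₂ := Real.exp) v hlin0
  have hcos : HasFDerivAt (fun w : EuclideanSpace ℝ (Fin n) => Real.cos (lam * w z1))
      ((-Real.sin (lam * v z1)) • (lam • (EuclideanSpace.proj z1 : EuclideanSpace ℝ (Fin n) →L[ℝ] ℝ))) v :=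
    (Real.hasDerivAt_cos (lam * v z1)).comp_hasFDerivAt (h₂ := Real.cos) v hlin1
  have h3 : HasFDerivAt
      (fun w : EuclideanSpace ℝ (Fin n) =>
        η * Real.exp (lam * w z0) * Real.cos (lam * w z1))
      ((η * Real.exp (lam * v z0) * Real.cos (lam * v z1) * lam) • (EuclideanSpace.proj z0 : EuclideanSpace ℝ (Fin n) →L[ℝ] ℝ)
        + (-(η * Real.exp (lam * v z0) * Real.sin (lam * v z1) * lam)) • (EuclideanSpace.proj z1 : EuclideanSpace ℝ (Fin n) →L[ℝ] ℝ))
      v := by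
    have := ((hexp.const_mul η).fun_mul hcos)
    refine this.congr_fderiv ?_
    ext w
    simp [smul_smul]
    ring
  have hD : HasFDerivAt u D v := by
    have hfun : u = fun w : EuclideanSpace ℝ (Fin n) =>
        (∑ i : Fin n, if (i : ℕ) < ℓ then (w i) ^ 2 else 0)
          - (ℓ : ℝ) * (w a) ^ 2
          + η * Real.exp (lam * w z0) * Real.cos (lam * w z1) := funext hu
    rw [hfun, hDdef]
    exact (h1.sub h2).add h3
  have hD0 : D = 0 := by
    have hg := hD.hasGradientAt.gradient
    rw [hgrad] at hg
    have : (InnerProductSpace.toDual ℝ (EuclideanSpace ℝ (Fin n))).symm D = 0 := hg.symm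
    simpa using congrArg (InnerProductSpace.toDual ℝ (EuclideanSpace ℝ (Fin n))) this
  have hDe : ∀ w, D w = 0 := fun w => by rw [hD0]; rfl
  -- evaluate D at basis vectors
  have hsingle : ∀ i j : Fin n, (EuclideanSpace.single i (1:ℝ)) j = if j = i then 1 else 0 :=
    fun i j => EuclideanSpace.single_apply i 1 j
  have haz0 : a ≠ z0 := by simp [ha, hz0, Fin.ext_iff]; omega
  have haz1 : a ≠ z1 := by simp [ha, hz1, Fin.ext_iff]
  have hz01 : z0 ≠ z1 := by simp [hz0, hz1, Fin.ext_iff]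
  have hval : ∀ i : Fin n, D (EuclideanSpace.single i (1:ℝ)) =
      (if (i : ℕ) < ℓ then 2 * v i else 0)
      - (if i = a then (ℓ : ℝ) * (2 * v a) else 0)
      + ((if i = z0 then η * Real.exp (lam * v z0) * Real.cos (lam * v z1) * lam else 0)
        + (if i = z1 then -(η * Real.exp (lam * v z0) * Real.sin (lam * v z1) * lam) else 0)) := by
    intro i
    rw [hDdef]
    simp only [ContinuousLinearMap.add_apply, ContinuousLinearMap.sub_apply,
      ContinuousLinearMap.sum_apply, ContinuousLinearMap.smul_apply,
      ContinuousLinearMap.zero_apply,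
      apply_ite (fun f : EuclideanSpace ℝ (Fin n) →L[ℝ] ℝ => f (EuclideanSpace.single i (1:ℝ))),
      PiLp.proj_apply, hsingle, smul_eq_mul]
    have hsum' : (∑ d : Fin n, if (d : ℕ) < ℓ then (2 * v d) * (if d = i then 1 else 0) else 0)
        = (if (i : ℕ) < ℓ then 2 * v i else 0) := by
      rw [Finset.sum_eq_single i (fun j _ hj => by simp [hj])
        (fun h => absurd (Finset.mem_univ i) h)]
      simp
    rw [hsum']
    by_cases h1 : i = a <;> by_cases h2 : i = z0 <;> by_cases h3 : i = z1 <;>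
      simp [h1, h2, h3, haz0, haz1, hz01, haz0.symm, haz1.symm, hz01.symm, eq_comm]
  have part1 : ∀ i : Fin n, 1 ≤ (i : ℕ) → (i : ℕ) < ℓ → v i = 0 := by
    intro i hi1 hi2
    have h := hval i
    rw [hDe] at h
    have hia : i ≠ a := by simp [ha, Fin.ext_iff]; omega
    have hiz0 : i ≠ z0 := by simp [hz0, Fin.ext_iff]; omega
    have hiz1 : i ≠ z1 := by simp [hz1, Fin.ext_iff]; omega
    rw [if_pos hi2, if_neg hia, if_neg hiz0, if_neg hiz1] at h
    linarith
  have party : v a = 0 := by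
    have h := hval a
    rw [hDe] at h
    have hal : ¬ ((a : ℕ) < ℓ) := by simp [ha]
    rw [if_neg hal, if_pos rfl, if_neg haz0, if_neg haz1] at h
    have hℓpos : (0:ℝ) < (ℓ : ℝ) := by exact_mod_cast hℓ
    have h2 : (ℓ:ℝ) * (2 * v a) = 0 := by linarith
    rcases mul_eq_zero.mp h2 with h3 | h3
    · exact absurd h3 hℓpos.ne'
    · linarith
  have partsin : Real.sin (lam * v z1) = 0 := by
    have h := hval z1
    rw [hDe] at h
    have hz1l : ¬ ((z1 : ℕ) < ℓ) := by simp [hz1]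
    rw [if_neg hz1l, if_neg (Ne.symm haz1), if_neg, if_pos rfl] at h
    · have he : 0 < Real.exp (lam * v z0) := Real.exp_pos _
      have : η * Real.exp (lam * v z0) * Real.sin (lam * v z1) * lam = 0 := by linarith
      have hpos : 0 < η * Real.exp (lam * v z0) * lam := by positivity
      have key : (η * Real.exp (lam * v z0) * lam) * Real.sin (lam * v z1) = 0 := by
        linear_combination this
      exact (mul_eq_zero.mp key).resolve_left hpos.ne'
    · simp [hz1, hz0, Fin.ext_iff]
  -- cos = ±1
  have hcossq : Real.cos (lam * v z1) ^ 2 = 1 := by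
    have := Real.sin_sq_add_cos_sq (lam * v z1)
    rw [partsin] at this
    simpa using this
  have hcases : Real.cos (lam * v z1) = 1 ∨ Real.cos (lam * v z1) = -1 := by
    have hmul : (Real.cos (lam * v z1) - 1) * (Real.cos (lam * v z1) + 1) = 0 := by linear_combination hcossq
    rcases mul_eq_zero.mp hmul with h | h
    · left; linarith
    · right; linarith
  have hsum : (∑ i : Fin n, if (i : ℕ) < ℓ then (v i) ^ 2 else 0) = (v z0) ^ 2 := by
    have : ∀ i : Fin n, (if (i : ℕ) < ℓ then (v i) ^ 2 else 0)
        = (if i = z0 then (v z0) ^ 2 else 0) := by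
      intro i
      by_cases hi : (i : ℕ) < ℓ
      · by_cases hi0 : i = z0
        · rw [hi0, if_pos (show ((z0 : Fin n) : ℕ) < ℓ by simp [hz0]; omega), if_pos rfl]
        · have hi1 : 1 ≤ (i : ℕ) := by
            rcases Nat.eq_zero_or_pos (i : ℕ) with h | h
            · exact absurd (Fin.ext h) hi0
            · exact h
          simp [hi, hi0, part1 i hi1 hi]
      · have : i ≠ z0 := by
          intro h; rw [h] at hi; exact hi (by simp [hz0]; omega)
        simp [hi, this]
    rw [Finset.sum_congr rfl (fun i _ => this i), Finset.sum_ite_eq' Finset.univ z0]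
    simp
  have hu0 : (v z0) ^ 2 + η * Real.exp (lam * v z0) * Real.cos (lam * v z1) = 0 := by
    have := hu v
    rw [h0] at this
    rw [hsum, party] at this
    linear_combination -this
  have partcos : Real.cos (lam * v z1) = -1 := by
    rcases hcases with h | h
    · exfalso
      rw [h, mul_one] at hu0
      have h1 : 0 < η * Real.exp (lam * v z0) := by positivity
      have h2 := sq_nonneg (v z0)
      linarith
    · exact h
  exact ⟨part1, party, partsin, partcos⟩
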